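/- Let α, β ∈ ℤ^n, let l, m be positive integers, let n₀ be a positive integer with α ≠ n₀β, and set p = -x^α(x^{-β} + x^{-2β} + ··· + x^{-n₀β}). Then 1/((1-x^α)^l (1-x^β)^m) = ∑_{t=1}^{l} binom(l+m-t-1, m-1) · p^m / ((1-x^α)^t (1-x^{α-n₀β})^{l+m-t}) + ∑_{t=1}^{m} binom(l+m-t-1, l-1) · p^{m-t} / ((1-x^β)^t (1-x^{α-n₀β})^{l+m-t}) as rational functions. -/

import Mathlib

open Finset

/-- The field of rational functions `ℚ(x₁, ..., xₙ)`. -/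
noncomputable abbrev RatFn (n : ℕ) : Type := FractionRing (MvPolynomial (Fin n) ℚ)

/-- The Laurent monomial `x^α = x₁^{α₁} ⋯ xₙ^{αₙ}` for `α ∈ ℤⁿ`. -/
noncomputable def xm {n : ℕ} (α : Fin n → ℤ) : RatFn n :=
  ∏ i, (algebraMap (MvPolynomial (Fin n) ℚ) (RatFn n) (MvPolynomial.X i)) ^ (α i)

private lemma algX_ne {n : ℕ} (i : Fin n) :
    (algebraMap (MvPolynomial (Fin n) ℚ) (RatFn n)) (MvPolynomial.X i) ≠ 0 := by
  intro h
  have hinj := IsFractionRing.injective (MvPolynomial (Fin n) ℚ) (RatFn n)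
  exact MvPolynomial.X_ne_zero i (hinj (h.trans (map_zero _).symm))

private lemma xm_add {n : ℕ} (γ δ : Fin n → ℤ) : xm (γ + δ) = xm γ * xm δ := by
  rw [xm, xm, xm, ← Finset.prod_mul_distrib]
  exact Finset.prod_congr rfl fun i _ => by
    rw [Pi.add_apply, zpow_add₀ (algX_ne i)]

private lemma xm_ne_zero {n : ℕ} (γ : Fin n → ℤ) : xm γ ≠ 0 := by
  rw [xm]
  exact Finset.prod_ne_zero_iff.2 fun i _ => zpow_ne_zero _ (algX_ne i)

private lemma prod_X_pow {n : ℕ} (f : Fin n → ℕ) :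
    (∏ i, (MvPolynomial.X i : MvPolynomial (Fin n) ℚ) ^ f i) =
      MvPolynomial.monomial (Finsupp.equivFunOnFinite.symm f) 1 := by
  calc (∏ i, (MvPolynomial.X i : MvPolynomial (Fin n) ℚ) ^ f i)
      = ∏ i, (MvPolynomial.X i : MvPolynomial (Fin n) ℚ) ^
          (Finsupp.equivFunOnFinite.symm f) i :=
        Finset.prod_congr rfl fun i _ => by
          rfl
    _ = ∏ i ∈ (Finsupp.equivFunOnFinite.symm f).support,
          (MvPolynomial.X i : MvPolynomial (Fin n) ℚ) ^
            (Finsupp.equivFunOnFinite.symm f) i :=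
        (Finset.prod_subset (Finset.subset_univ _) fun i _ hi => by
          simp only [Finsupp.mem_support_iff, ne_eq, not_not] at hi
          rw [hi, pow_zero]).symm
    _ = MvPolynomial.monomial (Finsupp.equivFunOnFinite.symm f) 1 :=
        MvPolynomial.prod_X_pow_eq_monomial

private lemma xm_eq_one {n : ℕ} {γ : Fin n → ℤ} (h : xm γ = 1) : γ = 0 := by
  set A := fun i : Fin n =>
    (algebraMap (MvPolynomial (Fin n) ℚ) (RatFn n)) (MvPolynomial.X i) with hA
  have hx : ∀ i : Fin n, A i ^ (γ i) * A i ^ ((-γ i).toNat : ℕ) = A i ^ ((γ i).toNat : ℕ) := by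
    intro i
    rw [← zpow_natCast (A i) ((-γ i).toNat), ← zpow_natCast (A i) ((γ i).toNat),
      ← zpow_add₀ (algX_ne i)]
    congr 1
    omega
  have hprod : (∏ i, A i ^ ((γ i).toNat : ℕ)) = ∏ i, A i ^ ((-γ i).toNat : ℕ) := by
    calc (∏ i, A i ^ ((γ i).toNat : ℕ)) = ∏ i, A i ^ (γ i) * A i ^ ((-γ i).toNat : ℕ) :=
          (Finset.prod_congr rfl fun i _ => (hx i).symm)
      _ = xm γ * ∏ i, A i ^ ((-γ i).toNat : ℕ) := by
          rw [Finset.prod_mul_distrib]; rfl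
      _ = ∏ i, A i ^ ((-γ i).toNat : ℕ) := by rw [h, one_mul]
  have hP : (∏ i, (MvPolynomial.X i : MvPolynomial (Fin n) ℚ) ^ ((γ i).toNat : ℕ)) =
      ∏ i, (MvPolynomial.X i : MvPolynomial (Fin n) ℚ) ^ ((-γ i).toNat : ℕ) := by
    apply IsFractionRing.injective (MvPolynomial (Fin n) ℚ) (RatFn n)
    rw [map_prod, map_prod]
    simpa only [map_pow] using hprod
  rw [prod_X_pow, prod_X_pow, MvPolynomial.monomial_eq_monomial_iff] at hP
  rcases hP with ⟨he, -⟩ | ⟨h1, -⟩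
  · have hpq := Finsupp.equivFunOnFinite.symm.injective he
    funext i
    have h2 := congrFun hpq i
    simp only [Pi.zero_apply]
    omega
  · exact absurd h1 one_ne_zero

private lemma xm_inj {n : ℕ} {γ δ : Fin n → ℤ} (h : xm γ = xm δ) : γ = δ := by
  have h1 : xm (γ - δ) * xm δ = xm δ := by
    rw [← xm_add, sub_add_cancel, h]
  have h2 : xm (γ - δ) = 1 := by
    field_simp [xm_ne_zero δ] at h1
    exact h1
  have := xm_eq_one h2
  ext i
  have := congrFun this i
  simp only [Pi.sub_apply, Pi.zero_apply] at this
  omega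


section core
variable {K : Type*} [Field K]

private lemma split {X Y S : K} (hX : X ≠ 0) (hY : Y ≠ 0) (hs : X + Y = S) (hS : S ≠ 0) :
    (X * Y)⁻¹ = (S * X)⁻¹ + (S * Y)⁻¹ := by
  field_simp
  linear_combination -hs

private lemma lemA {X Y S : K} (hX : X ≠ 0) (hY : Y ≠ 0) (hs : X + Y = S) (hS : S ≠ 0) (b : ℕ) :
    (X * Y ^ (b + 1))⁻¹ =
      (X * S ^ (b + 1))⁻¹ +
        ∑ i ∈ range (b + 1), (Y ^ (b + 1 - i) * S ^ (1 + i))⁻¹ := by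
  induction b with
  | zero =>
      simp only [zero_add, Finset.sum_range_one, pow_one, Nat.sub_zero]
      rw [split hX hY hs hS]
      ring
  | succ b ih =>
      have hrec : (X * Y ^ (b + 1 + 1))⁻¹ =
          S⁻¹ * (X * Y ^ (b + 1))⁻¹ + S⁻¹ * (Y ^ (b + 1 + 1))⁻¹ := by
        calc (X * Y ^ (b + 1 + 1))⁻¹ = (X * Y)⁻¹ * (Y ^ (b + 1))⁻¹ := by ring
        _ = ((S * X)⁻¹ + (S * Y)⁻¹) * (Y ^ (b + 1))⁻¹ := by rw [split hX hY hs hS]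
        _ = S⁻¹ * (X * Y ^ (b + 1))⁻¹ + S⁻¹ * (Y ^ (b + 1 + 1))⁻¹ := by ring
      rw [hrec, ih, mul_add, Finset.mul_sum]
      rw [Finset.sum_range_succ'
        (fun i => (Y ^ (b + 1 + 1 - i) * S ^ (1 + i))⁻¹) (b + 1)]
      have e : ∀ i ∈ range (b + 1),
          (Y ^ (b + 1 + 1 - (i + 1)) * S ^ (1 + (i + 1)))⁻¹
            = S⁻¹ * (Y ^ (b + 1 - i) * S ^ (1 + i))⁻¹ := by
        intro i hi
        rw [show b + 1 + 1 - (i + 1) = b + 1 - i from by omega,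
          show 1 + (i + 1) = 1 + i + 1 from by omega]
        ring
      rw [Finset.sum_congr rfl e]
      simp only [Nat.sub_zero]
      ring

private lemma corePF {X Y S : K} (hX : X ≠ 0) (hY : Y ≠ 0) (hs : X + Y = S) (hS : S ≠ 0) :
    ∀ a b : ℕ, (X ^ (a + 1) * Y ^ (b + 1))⁻¹ =
      ∑ i ∈ range (a + 1), ((b + i).choose b : K) * (X ^ (a + 1 - i) * S ^ (b + 1 + i))⁻¹ +
      ∑ i ∈ range (b + 1), ((a + i).choose a : K) * (Y ^ (b + 1 - i) * S ^ (a + 1 + i))⁻¹ := by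
  intro a
  induction a with
  | zero =>
      intro b
      simp only [zero_add, Finset.sum_range_one, Nat.add_zero, Nat.choose_self,
        Nat.choose_zero_right, Nat.cast_one, one_mul, pow_one, Nat.sub_zero]
      rw [lemA hX hY hs hS b]
  | succ a iha =>
      intro b
      induction b with
      | zero =>
          have hs' : Y + X = S := by rw [add_comm]; exact hs
          have h := lemA hY hX hs' hS (a + 1)
          simp only [zero_add, Finset.sum_range_one, Nat.add_zero, Nat.choose_self,
            Nat.choose_zero_right, Nat.cast_one, one_mul, pow_one, Nat.sub_zero]
          rw [mul_comm Y (X ^ (a + 1 + 1))] at h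
          rw [h]
          ring
      | succ b ihb =>
          have hrec : (X ^ (a + 1 + 1) * Y ^ (b + 1 + 1))⁻¹ =
              S⁻¹ * (X ^ (a + 1) * Y ^ (b + 1 + 1))⁻¹ +
                S⁻¹ * (X ^ (a + 1 + 1) * Y ^ (b + 1))⁻¹ := by
            calc (X ^ (a + 1 + 1) * Y ^ (b + 1 + 1))⁻¹
                = (X * Y)⁻¹ * (X ^ (a + 1) * Y ^ (b + 1))⁻¹ := by ring
              _ = ((S * X)⁻¹ + (S * Y)⁻¹) * (X ^ (a + 1) * Y ^ (b + 1))⁻¹ := by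
                  rw [split hX hY hs hS]
              _ = S⁻¹ * (X ^ (a + 1) * Y ^ (b + 1 + 1))⁻¹ +
                  S⁻¹ * (X ^ (a + 1 + 1) * Y ^ (b + 1))⁻¹ := by ring
          rw [hrec, iha (b + 1), ihb]
          rw [mul_add, mul_add, Finset.mul_sum, Finset.mul_sum, Finset.mul_sum,
            Finset.mul_sum]
          -- peel the RHS target sums
          rw [Finset.sum_range_succ'
            (fun i => ((b + 1 + i).choose (b + 1) : K) *
              (X ^ (a + 1 + 1 - i) * S ^ (b + 1 + 1 + i))⁻¹) (a + 1)]
          rw [Finset.sum_range_succ'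
            (fun i => ((a + 1 + i).choose (a + 1) : K) *
              (Y ^ (b + 1 + 1 - i) * S ^ (a + 1 + 1 + i))⁻¹) (b + 1)]
          -- peel the two LHS long sums
          rw [Finset.sum_range_succ'
            (fun i => S⁻¹ * (((b + i).choose b : K) *
              (X ^ (a + 1 + 1 - i) * S ^ (b + 1 + i))⁻¹)) (a + 1)]
          rw [Finset.sum_range_succ'
            (fun i => S⁻¹ * (((a + i).choose a : K) *
              (Y ^ (b + 1 + 1 - i) * S ^ (a + 1 + i))⁻¹)) (b + 1)]
          have e1 : ∀ i ∈ range (a + 1),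
              ((b + 1 + (i + 1)).choose (b + 1) : K) *
                (X ^ (a + 1 + 1 - (i + 1)) * S ^ (b + 1 + 1 + (i + 1)))⁻¹
              = S⁻¹ * (((b + 1 + i).choose (b + 1) : K) *
                  (X ^ (a + 1 - i) * S ^ (b + 1 + 1 + i))⁻¹) +
                S⁻¹ * (((b + (i + 1)).choose b : K) *
                  (X ^ (a + 1 + 1 - (i + 1)) * S ^ (b + 1 + (i + 1)))⁻¹) := by
            intro i hi
            rw [show a + 1 + 1 - (i + 1) = a + 1 - i from by omega,
              show b + 1 + (i + 1) = b + 1 + i + 1 from by omega,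
              show b + 1 + 1 + (i + 1) = b + 1 + 1 + i + 1 from by omega]
            rw [Nat.choose_succ_succ (b + 1 + i) b,
              show (b + (i + 1)).choose b = (b + 1 + i).choose b from by congr 1; omega]
            push_cast
            ring
          have e2 : ∀ i ∈ range (b + 1),
              ((a + 1 + (i + 1)).choose (a + 1) : K) *
                (Y ^ (b + 1 + 1 - (i + 1)) * S ^ (a + 1 + 1 + (i + 1)))⁻¹
              = S⁻¹ * (((a + (i + 1)).choose a : K) *
                  (Y ^ (b + 1 + 1 - (i + 1)) * S ^ (a + 1 + (i + 1)))⁻¹) +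
                S⁻¹ * (((a + 1 + i).choose (a + 1) : K) *
                  (Y ^ (b + 1 - i) * S ^ (a + 1 + 1 + i))⁻¹) := by
            intro i hi
            rw [show b + 1 + 1 - (i + 1) = b + 1 - i from by omega,
              show a + 1 + (i + 1) = a + 1 + i + 1 from by omega,
              show a + 1 + 1 + (i + 1) = a + 1 + 1 + i + 1 from by omega]
            rw [Nat.choose_succ_succ (a + 1 + i) a,
              show (a + (i + 1)).choose a = (a + 1 + i).choose a from by congr 1; omega]
            push_cast
            ring
          rw [Finset.sum_congr rfl e1, Finset.sum_congr rfl e2,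
            Finset.sum_add_distrib, Finset.sum_add_distrib]
          simp only [Nat.sub_zero, Nat.add_zero, Nat.choose_self, Nat.choose_zero_right,
            Nat.cast_one, one_mul]
          ring

/-- Lemma (e): two-factor reduction formula with multiplicities and elongation. -/
theorem two_factor_multiplicity (n : ℕ) (α β : Fin n → ℤ) (l m n₀ : ℕ)
    (hl : 0 < l) (hm : 0 < m) (hn₀ : 0 < n₀)
    (hα : α ≠ 0) (hβ : β ≠ 0) (hne : α ≠ (n₀ : ℤ) • β)
    (h1 : (1 : RatFn n) - xm α ≠ 0) (h2 : (1 : RatFn n) - xm β ≠ 0)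
    (h3 : (1 : RatFn n) - xm (α - (n₀ : ℤ) • β) ≠ 0) :
    (((1 : RatFn n) - xm α) ^ l * ((1 : RatFn n) - xm β) ^ m)⁻¹ =
      (∑ t ∈ Finset.Icc 1 l,
        ((l + m - t - 1).choose (m - 1) : RatFn n) *
          (-xm α * ∑ j ∈ Finset.range n₀, xm ((-(j + 1) : ℤ) • β)) ^ m *
          (((1 : RatFn n) - xm α) ^ t *
            ((1 : RatFn n) - xm (α - (n₀ : ℤ) • β)) ^ (l + m - t))⁻¹) +
      ∑ t ∈ Finset.Icc 1 m,
        ((l + m - t - 1).choose (l - 1) : RatFn n) *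
          (-xm α * ∑ j ∈ Finset.range n₀, xm ((-(j + 1) : ℤ) • β)) ^ (m - t) *
          (((1 : RatFn n) - xm β) ^ t *
            ((1 : RatFn n) - xm (α - (n₀ : ℤ) • β)) ^ (l + m - t))⁻¹ := by
  obtain ⟨a, rfl⟩ : ∃ a, l = a + 1 := ⟨l - 1, by omega⟩
  obtain ⟨b, rfl⟩ : ∃ b, m = b + 1 := ⟨m - 1, by omega⟩
  set P := -xm α * ∑ j ∈ Finset.range n₀, xm ((-(j + 1) : ℤ) • β) with hPdef
  set A := (1 : RatFn n) - xm α with hA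
  set B := (1 : RatFn n) - xm β with hB
  set C := (1 : RatFn n) - xm (α - (n₀ : ℤ) • β) with hC
  clear_value P A B C
  -- telescoping: P * B = xm α - xm (α - n₀ β)
  have hterm : ∀ j : ℕ, (B * xm α) * xm ((-(j + 1) : ℤ) • β)
      = xm (α - ((j + 1 : ℕ) : ℤ) • β) - xm (α - (j : ℤ) • β) := by
    intro j
    have e1 : xm α * xm ((-(j + 1) : ℤ) • β) = xm (α - ((j + 1 : ℕ) : ℤ) • β) := by
      rw [← xm_add]
      congr 1
      funext i
      simp only [Pi.add_apply, Pi.sub_apply, Pi.smul_apply, smul_eq_mul]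
      push_cast
      ring
    have e2 : xm β * xm (α - ((j + 1 : ℕ) : ℤ) • β) = xm (α - (j : ℤ) • β) := by
      rw [← xm_add]
      congr 1
      funext i
      simp only [Pi.add_apply, Pi.sub_apply, Pi.smul_apply, smul_eq_mul]
      push_cast
      ring
    calc (B * xm α) * xm ((-(j + 1) : ℤ) • β)
        = xm α * xm ((-(j + 1) : ℤ) • β)
          - xm β * (xm α * xm ((-(j + 1) : ℤ) • β)) := by rw [hB]; ring
      _ = xm (α - ((j + 1 : ℕ) : ℤ) • β) - xm (α - (j : ℤ) • β) := by rw [e1, e2]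
  have hPB : P * B = xm α - xm (α - (n₀ : ℤ) • β) := by
    calc P * B = -((B * xm α) * ∑ j ∈ Finset.range n₀, xm ((-(j + 1) : ℤ) • β)) := by
          rw [hPdef]; ring
      _ = -(∑ j ∈ Finset.range n₀, (B * xm α) * xm ((-(j + 1) : ℤ) • β)) := by
          rw [Finset.mul_sum]
      _ = -(∑ j ∈ Finset.range n₀,
            (xm (α - ((j + 1 : ℕ) : ℤ) • β) - xm (α - (j : ℤ) • β))) := by
          rw [Finset.sum_congr rfl fun j _ => hterm j]
      _ = -(xm (α - ((n₀ : ℕ) : ℤ) • β) - xm (α - ((0 : ℕ) : ℤ) • β)) := by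
          rw [Finset.sum_range_sub (fun j : ℕ => xm (α - (j : ℤ) • β)) n₀]
      _ = xm α - xm (α - (n₀ : ℤ) • β) := by
          simp only [Nat.cast_zero, zero_smul, sub_zero]
          ring
  have hYne : P * B ≠ 0 := by
    rw [hPB]
    intro h0
    have heq : α = α - (n₀ : ℤ) • β := xm_inj (sub_eq_zero.mp h0)
    apply hβ
    funext i
    have hi := congrFun heq i
    simp only [Pi.sub_apply, Pi.smul_apply, smul_eq_mul] at hi
    have hz : (n₀ : ℤ) * β i = 0 := by omega
    rcases mul_eq_zero.mp hz with h' | h'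
    · exfalso; omega
    · exact h'
  have hP0 : P ≠ 0 := fun h => hYne (by rw [h, zero_mul])
  have hS : A + P * B = C := by
    rw [hPB, hA, hC]; ring
  have core := corePF h1 hYne hS h3 a b
  calc (A ^ (a + 1) * B ^ (b + 1))⁻¹
      = P ^ (b + 1) * (A ^ (a + 1) * (P * B) ^ (b + 1))⁻¹ := by
        have hc := mul_inv_cancel₀ (pow_ne_zero (b + 1) hP0)
        linear_combination (-((A ^ (a + 1) * B ^ (b + 1))⁻¹)) * hc
    _ = P ^ (b + 1) *
        (∑ i ∈ Finset.range (a + 1),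
            ((b + i).choose b : RatFn n) * (A ^ (a + 1 - i) * C ^ (b + 1 + i))⁻¹ +
         ∑ i ∈ Finset.range (b + 1),
            ((a + i).choose a : RatFn n) * ((P * B) ^ (b + 1 - i) * C ^ (a + 1 + i))⁻¹) := by
        rw [core]
    _ = ∑ i ∈ Finset.range (a + 1),
          ((b + i).choose b : RatFn n) * P ^ (b + 1) * (A ^ (a + 1 - i) * C ^ (b + 1 + i))⁻¹
        + ∑ i ∈ Finset.range (b + 1),
          ((a + i).choose a : RatFn n) * P ^ i * (B ^ (b + 1 - i) * C ^ (a + 1 + i))⁻¹ := by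
        rw [mul_add, Finset.mul_sum, Finset.mul_sum]
        congr 1
        · exact Finset.sum_congr rfl fun i _ => by ring
        · refine Finset.sum_congr rfl fun i hi => ?_
          simp only [Finset.mem_range] at hi
          have hq := mul_inv_cancel₀ (pow_ne_zero (b + 1 - i) hP0)
          have hsplit : P ^ (b + 1) = P ^ i * P ^ (b + 1 - i) := by
            rw [← pow_add]; congr 1; omega
          calc P ^ (b + 1) * (((a + i).choose a : RatFn n) *
                ((P * B) ^ (b + 1 - i) * C ^ (a + 1 + i))⁻¹)
              = (((a + i).choose a : RatFn n) * P ^ i *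
                  (B ^ (b + 1 - i) * C ^ (a + 1 + i))⁻¹) *
                (P ^ (b + 1 - i) * (P ^ (b + 1 - i))⁻¹) := by
                rw [hsplit]; ring
            _ = ((a + i).choose a : RatFn n) * P ^ i *
                  (B ^ (b + 1 - i) * C ^ (a + 1 + i))⁻¹ := by
                rw [hq, mul_one]
    _ = _ := by
        congr 1
        · refine Finset.sum_nbij' (fun i => a + 1 - i) (fun t => a + 1 - t)
            ?_ ?_ ?_ ?_ ?_
          · intro i hi
            simp only [Finset.mem_range] at hi
            simp only [Finset.mem_Icc]
            omega
          · intro t ht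
            simp only [Finset.mem_Icc] at ht
            simp only [Finset.mem_range]
            omega
          · intro i hi
            simp only [Finset.mem_range] at hi
            omega
          · intro t ht
            simp only [Finset.mem_Icc] at ht
            omega
          · intro i hi
            simp only [Finset.mem_range] at hi
            rw [show a + 1 + (b + 1) - (a + 1 - i) - 1 = b + i from by omega,
              show a + 1 + (b + 1) - (a + 1 - i) = b + 1 + i from by omega,
              show b + 1 - 1 = b from rfl]
        · refine Finset.sum_nbij' (fun i => b + 1 - i) (fun t => b + 1 - t)
            ?_ ?_ ?_ ?_ ?_
          · intro i hi
            simp only [Finset.mem_range] at hi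
            simp only [Finset.mem_Icc]
            omega
          · intro t ht
            simp only [Finset.mem_Icc] at ht
            simp only [Finset.mem_range]
            omega
          · intro i hi
            simp only [Finset.mem_range] at hi
            omega
          · intro t ht
            simp only [Finset.mem_Icc] at ht
            omega
          · intro i hi
            simp only [Finset.mem_range] at hi
            rw [show a + 1 + (b + 1) - (b + 1 - i) - 1 = a + i from by omega,
              show a + 1 + (b + 1) - (b + 1 - i) = a + 1 + i from by omega,
              show b + 1 - (b + 1 - i) = i from by omega,
              show a + 1 - 1 = a from rfl]
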